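/- Assume w_j ≤ w_0 for every j ∈ V, and let v ∈ V and i ∈ win_v. Then there exists a chain partition of T_v having T[v,i] as one of its parts, and the minimum total cost among all chain partitions of T_v having T[v,i] as one of their parts equals max_{p ∈ T[v,i]} s_p + Σ_j OPT(j), where the sum ranges over all j ∈ V with j ∉ T[v,i] whose parent lies in T[v,i]. -/

import Mathlib

open Finset
open scoped Classical

noncomputable section

variable {V : Type} [Fintype V] [PartialOrder V]

/-- The chain `T[v,i]` : all vertices `p` with `v ≤ p ≤ i`. -/
def chainCC (v i : V) : Finset V := univ.filter (fun p => v ≤ p ∧ p ≤ i)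

/-- `p` is the parent of `j`. -/
def IsParent (p j : V) : Prop := p < j ∧ ¬ ∃ q, p < q ∧ q < j

/-- The window of `v`. -/
def win (w : V → ℝ) (w0 : ℝ) (v : V) : Finset V :=
  univ.filter (fun i => v ≤ i ∧ ∑ j ∈ chainCC v i, w j ≤ w0)

/-- The vertices `j` outside `T[v,i]` whose parent lies in `T[v,i]`. -/
def branchOff (v i : V) : Finset V :=
  univ.filter (fun j => j ∉ chainCC v i ∧ ∃ p ∈ chainCC v i, IsParent p j)

/-- A chain partition of the subtree `T_v`: a family of nonempty pairwise-disjoint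
parts covering `T_v`, each part pairwise comparable, order-convex, and of total
weight at most `w0`. -/
def IsChainPartition (w : V → ℝ) (w0 : ℝ) (v : V) (P : Finset (Finset V)) : Prop :=
  (∀ C ∈ P, C.Nonempty) ∧
  (∀ C ∈ P, ∀ a ∈ C, v ≤ a) ∧
  (∀ u : V, v ≤ u → ∃! C, C ∈ P ∧ u ∈ C) ∧
  (∀ C ∈ P, ∀ a ∈ C, ∀ b ∈ C, a ≤ b ∨ b ≤ a) ∧
  (∀ C ∈ P, ∀ a ∈ C, ∀ b ∈ C, ∀ p : V, a ≤ p → p ≤ b → p ∈ C) ∧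
  (∀ C ∈ P, ∑ j ∈ C, w j ≤ w0)

/-- Total cost of a partition: the sum over parts `C` of `max_{j ∈ C} s_j`. -/
def totalCost (s : V → ℝ) (P : Finset (Finset V)) : ℝ :=
  ∑ C ∈ P, sSup (s '' (C : Set V))

/-- `OPT v`: the minimum total cost of a chain partition of `T_v`. -/
def OPT (w : V → ℝ) (w0 : ℝ) (s : V → ℝ) (v : V) : ℝ :=
  sInf {c : ℝ | ∃ P : Finset (Finset V), IsChainPartition w w0 v P ∧ c = totalCost s P}

end

section AuxLemmas

variable {V : Type} [Fintype V] [PartialOrder V]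

lemma mem_chainCC' {v i p : V} : p ∈ chainCC v i ↔ v ≤ p ∧ p ≤ i := by
  simp [chainCC]

lemma coe_chainCC (v i : V) : ((chainCC v i : Finset V) : Set V) = {p : V | v ≤ p ∧ p ≤ i} := by
  ext p; simp [chainCC]

lemma singleton_cp (w : V → ℝ) (w0 : ℝ) (hwin : ∀ j : V, w j ≤ w0) (v : V) :
    IsChainPartition w w0 v ((univ.filter (fun u => v ≤ u)).image (fun u => ({u} : Finset V))) := by
  have hmem : ∀ C : Finset V,
      C ∈ (univ.filter (fun u => v ≤ u)).image (fun u => ({u} : Finset V)) ↔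
      ∃ u : V, v ≤ u ∧ C = {u} := by
    intro C
    simp only [mem_image, mem_filter, mem_univ, true_and]
    constructor
    · rintro ⟨u, hu, rfl⟩; exact ⟨u, hu, rfl⟩
    · rintro ⟨u, hu, rfl⟩; exact ⟨u, hu, rfl⟩
  refine ⟨?_, ?_, ?_, ?_, ?_, ?_⟩
  · intro C hC; obtain ⟨u, -, rfl⟩ := (hmem C).mp hC; exact singleton_nonempty u
  · intro C hC a ha; obtain ⟨u, hu, rfl⟩ := (hmem C).mp hC
    rw [Finset.mem_singleton] at ha; subst ha; exact hu
  · intro u hu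
    refine ⟨{u}, ⟨(hmem _).mpr ⟨u, hu, rfl⟩, Finset.mem_singleton_self u⟩, ?_⟩
    rintro C ⟨hC, huC⟩
    obtain ⟨u', -, rfl⟩ := (hmem C).mp hC
    rw [Finset.mem_singleton] at huC; subst huC; rfl
  · intro C hC a ha b hb
    obtain ⟨u, -, rfl⟩ := (hmem C).mp hC
    rw [Finset.mem_singleton] at ha hb; subst ha; subst hb; exact Or.inl le_rfl
  · intro C hC a ha b hb p hap hpb
    obtain ⟨u, -, rfl⟩ := (hmem C).mp hC
    rw [Finset.mem_singleton] at ha hb ⊢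
    subst ha; subst hb; exact le_antisymm hpb hap
  · intro C hC
    obtain ⟨u, -, rfl⟩ := (hmem C).mp hC
    simpa using hwin u

lemma optSet_finite (w : V → ℝ) (w0 : ℝ) (s : V → ℝ) (v : V) :
    {c : ℝ | ∃ P : Finset (Finset V), IsChainPartition w w0 v P ∧ c = totalCost s P}.Finite := by
  have : {c : ℝ | ∃ P : Finset (Finset V), IsChainPartition w w0 v P ∧ c = totalCost s P}
      = totalCost s '' {P : Finset (Finset V) | IsChainPartition w w0 v P} := by
    ext c
    simp only [Set.mem_setOf_eq, Set.mem_image]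
    constructor
    · rintro ⟨P, hP, rfl⟩; exact ⟨P, hP, rfl⟩
    · rintro ⟨P, hP, rfl⟩; exact ⟨P, hP, rfl⟩
  rw [this]
  exact (Set.toFinite _).image _

lemma optSet_nonempty (w : V → ℝ) (w0 : ℝ) (hwin : ∀ j : V, w j ≤ w0) (s : V → ℝ) (v : V) :
    {c : ℝ | ∃ P : Finset (Finset V), IsChainPartition w w0 v P ∧ c = totalCost s P}.Nonempty :=
  ⟨_, _, singleton_cp w w0 hwin v, rfl⟩

lemma exists_opt (w : V → ℝ) (w0 : ℝ) (hwin : ∀ j : V, w j ≤ w0) (s : V → ℝ) (v : V) :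
    ∃ P : Finset (Finset V), IsChainPartition w w0 v P ∧ totalCost s P = OPT w w0 s v := by
  have h := (optSet_nonempty w w0 hwin s v).csInf_mem (optSet_finite w w0 s v)
  obtain ⟨P, hP, hc⟩ := h
  exact ⟨P, hP, hc.symm⟩

lemma opt_le (w : V → ℝ) (w0 : ℝ) (s : V → ℝ) (v : V) {P : Finset (Finset V)}
    (hP : IsChainPartition w w0 v P) : OPT w w0 s v ≤ totalCost s P :=
  csInf_le (Set.Finite.bddBelow (optSet_finite w w0 s v)) ⟨P, hP, rfl⟩

/-- The key tree lemma: every `u ∈ T_v \ T[v,i]` lies in exactly one branching subtree. -/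
lemma branch_unique (htree : ∀ a b c : V, a ≤ c → b ≤ c → a ≤ b ∨ b ≤ a)
    {v i : V} (hvi : v ≤ i) {u : V} (hvu : v ≤ u) (hui : ¬ u ≤ i) :
    ∃! j : V, j ∈ branchOff v i ∧ j ≤ u := by
  -- uniqueness helper
  have huniq : ∀ j₁ j₂ : V, (j₁ ∈ branchOff v i ∧ j₁ ≤ u) → (j₂ ∈ branchOff v i ∧ j₂ ≤ u) →
      j₁ = j₂ := by
    have key : ∀ j₁ j₂ : V, j₁ ∈ branchOff v i → j₂ ∈ branchOff v i → j₁ ≤ j₂ → j₁ = j₂ := by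
      intro j₁ j₂ h1 h2 hle
      by_contra hne
      have hlt : j₁ < j₂ := lt_of_le_of_ne hle hne
      simp only [branchOff, mem_filter, mem_univ, true_and] at h1 h2
      obtain ⟨hn2, p₂, hp₂, hp₂lt, hp₂par⟩ := h2
      rw [mem_chainCC'] at hp₂
      have hcomp : p₂ ≤ j₁ ∨ j₁ ≤ p₂ := htree p₂ j₁ j₂ hp₂lt.le hle
      rcases hcomp with h | h
      · have : p₂ < j₁ := lt_of_le_of_ne h (by
          rintro rfl
          exact h1.1 (mem_chainCC'.mpr ⟨hp₂.1, hp₂.2⟩))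
        exact hp₂par ⟨j₁, this, hlt⟩
      · exact h1.1 (mem_chainCC'.mpr ⟨le_trans (by
          have := h1.2; obtain ⟨p₁, hp₁, hp₁lt, -⟩ := this
          exact le_trans (mem_chainCC'.mp hp₁).1 hp₁lt.le) le_rfl, le_trans h hp₂.2⟩)
    intro j₁ j₂ ⟨h1, h1u⟩ ⟨h2, h2u⟩
    rcases htree j₁ j₂ u h1u h2u with h | h
    · exact key j₁ j₂ h1 h2 h
    · exact (key j₂ j₁ h2 h1 h).symm
  -- existence
  classical
  set A : Finset V := univ.filter (fun p => v ≤ p ∧ p ≤ u ∧ p ≤ i) with hA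
  set B : Finset V := univ.filter (fun p => v ≤ p ∧ p ≤ u ∧ ¬ p ≤ i) with hB
  have hAne : A.Nonempty := ⟨v, by
    simp only [hA, mem_filter, mem_univ, true_and]; exact ⟨le_rfl, hvu, hvi⟩⟩
  have hBne : B.Nonempty := ⟨u, by
    simp only [hB, mem_filter, mem_univ, true_and]; exact ⟨hvu, le_rfl, hui⟩⟩
  obtain ⟨m, hmA, hmmax⟩ := A.exists_maximal hAne
  obtain ⟨j, hjB, hjmin⟩ := B.exists_minimal hBne
  simp only [hA, mem_filter, mem_univ, true_and] at hmA
  simp only [hB, mem_filter, mem_univ, true_and] at hjB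
  obtain ⟨hvm, hmu, hmi⟩ := hmA
  obtain ⟨hvj, hju, hji⟩ := hjB
  have hmaxA : ∀ p : V, v ≤ p → p ≤ u → p ≤ i → p ≤ m := by
    intro p hvp hpu hpi
    rcases htree p m u hpu hmu with h | h
    · exact h
    · rcases lt_or_eq_of_le h with h' | h'
      · exact absurd h' (not_lt_of_ge (hmmax (by simp [hA, hvp, hpu, hpi]) h))
      · exact h'.ge
  have hminB : ∀ p : V, v ≤ p → p ≤ u → ¬ p ≤ i → j ≤ p := by
    intro p hvp hpu hpi
    rcases htree p j u hpu hju with h | h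
    · rcases lt_or_eq_of_le h with h' | h'
      · exact absurd h' (not_lt_of_ge (hjmin (by simp [hB, hvp, hpu, hpi]) h))
      · exact h'.ge
    · exact h
  have hmj : m < j := by
    rcases htree m j u hmu hju with h | h
    · exact lt_of_le_of_ne h (by rintro rfl; exact hji hmi)
    · exact absurd (le_trans h hmi) hji
  have hpar : IsParent m j := by
    refine ⟨hmj, ?_⟩
    rintro ⟨q, hmq, hqj⟩
    have hvq : v ≤ q := le_trans hvm hmq.le
    have hqu : q ≤ u := le_trans hqj.le hju
    by_cases hqi : q ≤ i
    · exact absurd (hmaxA q hvq hqu hqi) (not_le_of_gt hmq)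
    · exact absurd (hminB q hvq hqu hqi) (not_le_of_gt hqj)
  have hjbr : j ∈ branchOff v i := by
    simp only [branchOff, mem_filter, mem_univ, true_and]
    refine ⟨?_, m, mem_chainCC'.mpr ⟨hvm, hmi⟩, hpar⟩
    rw [mem_chainCC']
    rintro ⟨-, h⟩; exact hji h
  exact ⟨j, ⟨hjbr, hju⟩, fun j' hj' => huniq j' j hj' ⟨hjbr, hju⟩⟩

lemma branchOff_ge {v i j : V} (hj : j ∈ branchOff v i) : v ≤ j := by
  simp only [branchOff, mem_filter, mem_univ, true_and] at hj
  obtain ⟨-, p, hp, hplt, -⟩ := hj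
  exact le_trans (mem_chainCC'.mp hp).1 hplt.le

lemma branchOff_not_le {v i j : V} (hj : j ∈ branchOff v i) : ¬ j ≤ i := by
  simp only [branchOff, mem_filter, mem_univ, true_and] at hj
  intro h
  exact hj.1 (mem_chainCC'.mpr ⟨branchOff_ge (by
    simp only [branchOff, mem_filter, mem_univ, true_and]; exact hj), h⟩)

end AuxLemmas

theorem stmt_13 (V : Type) [Fintype V] [Nonempty V] [PartialOrder V]
    (htree : ∀ a b c : V, a ≤ c → b ≤ c → a ≤ b ∨ b ≤ a)
    (w : V → ℝ) (s : V → ℝ) (w0 : ℝ)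
    (hw : ∀ i : V, 0 ≤ w i) (hw0 : 0 ≤ w0)
    (hwin : ∀ j : V, w j ≤ w0)
    (v i : V) (hi : i ∈ win w w0 v) :
    IsLeast {c : ℝ | ∃ P : Finset (Finset V),
        IsChainPartition w w0 v P ∧ chainCC v i ∈ P ∧ c = totalCost s P}
      (sSup (s '' {p : V | v ≤ p ∧ p ≤ i}) + ∑ j ∈ branchOff v i, OPT w w0 s j) := by
  classical
  simp only [win, mem_filter, mem_univ, true_and] at hi
  obtain ⟨hvi, hWsum⟩ := hi
  have hsupEq : sSup (s '' {p : V | v ≤ p ∧ p ≤ i}) = sSup (s '' ((chainCC v i : Finset V) : Set V)) := by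
    rw [coe_chainCC]
  -- basic facts about chainCC v i
  have hchainNe : (chainCC v i).Nonempty := ⟨v, mem_chainCC'.mpr ⟨le_rfl, hvi⟩⟩
  -- the branching trees are where u lives if u ∉ chainCC
  have hbr := fun (u : V) (hvu : v ≤ u) (hui : ¬ u ≤ i) => branch_unique htree hvi hvu hui
  constructor
  · -- Membership: construct the partition
    choose Pf hPf1 hPf2 using fun j : V => exists_opt w w0 hwin s j
    set Q : Finset (Finset V) := (branchOff v i).biUnion (fun j => Pf j) with hQdef
    -- parts of Pf j sit inside T_j
    have hsub : ∀ j : V, ∀ C ∈ Pf j, ∀ a ∈ C, j ≤ a := fun j => (hPf1 j).2.1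
    have hQchain : ∀ C ∈ Q, C ∉ ({chainCC v i} : Finset (Finset V)) := by
      intro C hC
      simp only [hQdef, mem_biUnion] at hC
      obtain ⟨j, hj, hCj⟩ := hC
      obtain ⟨a, ha⟩ := (hPf1 j).1 C hCj
      simp only [Finset.mem_singleton]
      rintro rfl
      exact branchOff_not_le hj (le_trans (hsub j _ hCj a ha) (mem_chainCC'.mp ha).2)
    have hQne : chainCC v i ∉ Q := by
      intro h
      exact hQchain _ h (Finset.mem_singleton_self _)
    set P : Finset (Finset V) := insert (chainCC v i) Q with hPdef
    have hmemP : ∀ C : Finset V, C ∈ P ↔ C = chainCC v i ∨ ∃ j ∈ branchOff v i, C ∈ Pf j := by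
      intro C
      simp [hPdef, hQdef]
    -- disjointness of subtrees
    have hdisj : ∀ j₁ ∈ branchOff v i, ∀ j₂ ∈ branchOff v i, ∀ a : V,
        j₁ ≤ a → j₂ ≤ a → j₁ = j₂ := by
      intro j₁ hj₁ j₂ hj₂ a h1 h2
      have hva : v ≤ a := le_trans (branchOff_ge hj₁) h1
      have hai : ¬ a ≤ i := fun h => branchOff_not_le hj₁ (le_trans h1 h)
      obtain ⟨j, -, hu⟩ := hbr a hva hai
      rw [hu j₁ ⟨hj₁, h1⟩, hu j₂ ⟨hj₂, h2⟩]
    have hCP : IsChainPartition w w0 v P := by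
      refine ⟨?_, ?_, ?_, ?_, ?_, ?_⟩
      · intro C hC
        rcases (hmemP C).mp hC with rfl | ⟨j, hj, hCj⟩
        · exact hchainNe
        · exact (hPf1 j).1 C hCj
      · intro C hC a ha
        rcases (hmemP C).mp hC with rfl | ⟨j, hj, hCj⟩
        · exact (mem_chainCC'.mp ha).1
        · exact le_trans (branchOff_ge hj) (hsub j C hCj a ha)
      · intro u hvu
        by_cases hui : u ≤ i
        · refine ⟨chainCC v i, ⟨(hmemP _).mpr (Or.inl rfl), mem_chainCC'.mpr ⟨hvu, hui⟩⟩, ?_⟩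
          rintro C ⟨hC, huC⟩
          rcases (hmemP C).mp hC with rfl | ⟨j, hj, hCj⟩
          · rfl
          · exact absurd (le_trans (hsub j C hCj u huC) hui) (branchOff_not_le hj)
        · obtain ⟨j, ⟨hj, hju⟩, hjun⟩ := hbr u hvu hui
          obtain ⟨C, ⟨hCj, huC⟩, hCun⟩ := (hPf1 j).2.2.1 u hju
          refine ⟨C, ⟨(hmemP C).mpr (Or.inr ⟨j, hj, hCj⟩), huC⟩, ?_⟩
          rintro C' ⟨hC', huC'⟩
          rcases (hmemP C').mp hC' with rfl | ⟨j', hj', hC'j⟩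
          · exact absurd (mem_chainCC'.mp huC').2 hui
          · have : j' = j := hdisj j' hj' j hj u (hsub j' C' hC'j u huC') hju
            subst this
            exact hCun C' ⟨hC'j, huC'⟩
      · intro C hC a ha b hb
        rcases (hmemP C).mp hC with rfl | ⟨j, hj, hCj⟩
        · exact htree a b i (mem_chainCC'.mp ha).2 (mem_chainCC'.mp hb).2
        · exact (hPf1 j).2.2.2.1 C hCj a ha b hb
      · intro C hC a ha b hb p hap hpb
        rcases (hmemP C).mp hC with rfl | ⟨j, hj, hCj⟩
        · exact mem_chainCC'.mpr ⟨le_trans (mem_chainCC'.mp ha).1 hap,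
            le_trans hpb (mem_chainCC'.mp hb).2⟩
        · exact (hPf1 j).2.2.2.2.1 C hCj a ha b hb p hap hpb
      · intro C hC
        rcases (hmemP C).mp hC with rfl | ⟨j, hj, hCj⟩
        · exact hWsum
        · exact (hPf1 j).2.2.2.2.2 C hCj
    refine ⟨P, hCP, (hmemP _).mpr (Or.inl rfl), ?_⟩
    -- cost computation
    have hpd : (↑(branchOff v i) : Set V).PairwiseDisjoint Pf := by
      intro j₁ hj₁ j₂ hj₂ hne
      simp only [Finset.mem_coe] at hj₁ hj₂
      refine Finset.disjoint_left.mpr ?_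
      intro C hC1 hC2
      obtain ⟨a, ha⟩ := (hPf1 j₁).1 C hC1
      exact hne (hdisj j₁ hj₁ j₂ hj₂ a (hsub j₁ C hC1 a ha) (hsub j₂ C hC2 a ha))
    have : totalCost s P = sSup (s '' ((chainCC v i : Finset V) : Set V)) + ∑ j ∈ branchOff v i, totalCost s (Pf j) := by
      rw [hPdef]
      unfold totalCost
      rw [Finset.sum_insert hQne, hQdef, Finset.sum_biUnion hpd]
    rw [this, hsupEq]
    congr 1
    exact Finset.sum_congr rfl (fun j _ => (hPf2 j).symm)
  · -- Lower bound
    rintro c ⟨P, hCP, hchainP, rfl⟩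
    obtain ⟨hne, hge, huniq, hchain, hconv, hwt⟩ := hCP
    set Q' : Finset (Finset V) := P.erase (chainCC v i) with hQ'def
    have hsplit : totalCost s P = sSup (s '' ((chainCC v i : Finset V) : Set V)) + totalCost s Q' := by
      unfold totalCost
      rw [hQ'def, ← Finset.add_sum_erase P _ hchainP]
    -- each part of Q' is disjoint from chainCC
    have hQ'disj : ∀ C ∈ Q', ∀ a ∈ C, a ∉ chainCC v i := by
      intro C hC a ha hachain
      have hC' : C ∈ P := Finset.mem_of_mem_erase hC
      have hCeq := huniq a (hge C hC' a ha)
      obtain ⟨D, -, hD⟩ := hCeq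
      have h1 : C = D := hD C ⟨hC', ha⟩
      have h2 : chainCC v i = D := hD _ ⟨hchainP, hachain⟩
      exact (Finset.ne_of_mem_erase hC) (h1.trans h2.symm)
    -- each part of Q' has a unique branch j
    have hexj : ∀ C ∈ Q', ∃ j, j ∈ branchOff v i ∧ ∀ a ∈ C, j ≤ a := by
      intro C hC
      obtain ⟨a₀, ha₀⟩ := hne C (Finset.mem_of_mem_erase hC)
      have hva₀ : v ≤ a₀ := hge C (Finset.mem_of_mem_erase hC) a₀ ha₀
      have ha₀i : ¬ a₀ ≤ i := fun h => hQ'disj C hC a₀ ha₀ (mem_chainCC'.mpr ⟨hva₀, h⟩)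
      obtain ⟨j, ⟨hj, hja₀⟩, hju⟩ := hbr a₀ hva₀ ha₀i
      refine ⟨j, hj, ?_⟩
      intro a ha
      have hva : v ≤ a := hge C (Finset.mem_of_mem_erase hC) a ha
      have hai : ¬ a ≤ i := fun h => hQ'disj C hC a ha (mem_chainCC'.mpr ⟨hva, h⟩)
      obtain ⟨j', ⟨hj', hj'a⟩, hj'u⟩ := hbr a hva hai
      rcases hchain C (Finset.mem_of_mem_erase hC) a ha a₀ ha₀ with h | h
      · -- a ≤ a₀ : j' ≤ a ≤ a₀ so j' = j by uniqueness at a₀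
        have := hju j' ⟨hj', le_trans hj'a h⟩
        rw [← this]; exact hj'a
      · -- a₀ ≤ a : j ≤ a₀ ≤ a
        exact le_trans hja₀ h
    -- the branch selector function
    have hNV : Nonempty V := ⟨v⟩
    set jOf : Finset V → V := fun C =>
      if h : ∃ j, j ∈ branchOff v i ∧ ∀ a ∈ C, j ≤ a then h.choose else Classical.arbitrary V
      with hjOfdef
    have hjOf : ∀ C ∈ Q', jOf C ∈ branchOff v i ∧ ∀ a ∈ C, jOf C ≤ a := by
      intro C hC
      have h := hexj C hC
      simp only [hjOfdef, dif_pos h]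
      exact h.choose_spec
    -- for each j ∈ branchOff, the fiber is a chain partition of T_j
    have hfiber : ∀ j ∈ branchOff v i,
        IsChainPartition w w0 j (Q'.filter (fun C => jOf C = j)) := by
      intro j hj
      have hmemf : ∀ C : Finset V, C ∈ Q'.filter (fun C => jOf C = j) ↔ C ∈ Q' ∧ jOf C = j :=
        fun C => Finset.mem_filter
      refine ⟨?_, ?_, ?_, ?_, ?_, ?_⟩
      · intro C hC; exact hne C (Finset.mem_of_mem_erase ((hmemf C).mp hC).1)
      · intro C hC a ha
        obtain ⟨hC', hje⟩ := (hmemf C).mp hC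
        rw [← hje]; exact (hjOf C hC').2 a ha
      · intro u hju
        have hvu : v ≤ u := le_trans (branchOff_ge hj) hju
        have hui : ¬ u ≤ i := fun h => branchOff_not_le hj (le_trans hju h)
        obtain ⟨C, ⟨hCP', huC⟩, hCun⟩ := huniq u hvu
        have hCQ' : C ∈ Q' := by
          rw [hQ'def, Finset.mem_erase]
          refine ⟨?_, hCP'⟩
          rintro rfl
          exact hui (mem_chainCC'.mp huC).2
        have hjC : jOf C = j := by
          obtain ⟨hjb, hjle⟩ := hjOf C hCQ'
          obtain ⟨j', -, hj'u⟩ := hbr u hvu hui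
          rw [hj'u (jOf C) ⟨hjb, hjle u huC⟩, hj'u j ⟨hj, hju⟩]
        refine ⟨C, ⟨(hmemf C).mpr ⟨hCQ', hjC⟩, huC⟩, ?_⟩
        rintro C' ⟨hC', huC'⟩
        exact hCun C' ⟨Finset.mem_of_mem_erase ((hmemf C').mp hC').1, huC'⟩
      · intro C hC a ha b hb
        exact hchain C (Finset.mem_of_mem_erase ((hmemf C).mp hC).1) a ha b hb
      · intro C hC a ha b hb p hap hpb
        exact hconv C (Finset.mem_of_mem_erase ((hmemf C).mp hC).1) a ha b hb p hap hpb
      · intro C hC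
        exact hwt C (Finset.mem_of_mem_erase ((hmemf C).mp hC).1)
    -- assemble
    rw [hsplit, hsupEq]
    have hmapsto : ∀ C ∈ Q', jOf C ∈ branchOff v i := fun C hC => (hjOf C hC).1
    have hfib := Finset.sum_fiberwise_of_maps_to hmapsto (fun C => sSup (s '' (C : Set V)))
    have : totalCost s Q' = ∑ j ∈ branchOff v i, totalCost s (Q'.filter (fun C => jOf C = j)) := by
      unfold totalCost
      exact hfib.symm
    rw [this]
    gcongr with j hj
    exact opt_le w w0 s j (hfiber j hj)
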